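/- Let F : 2^V → ℝ with F(∅) = 0 and F(A) ≥ 0 for all A, and define Θ_∞(w) = inf{ Σ_{S⊆V} α_S F(S) : α_S ≥ 0, Σ_{S⊆V} α_S = 1, Σ_{S : i∈S} α_S ≥ |w_i| ∀i }. Then for every w ∈ ℝ^V with ‖w‖_∞ ≤ 1, strong linear programming duality gives Θ_∞(w) = max{ Σ_{i∈V} κ_i |w_i| + min_{S⊆V} ( F(S) − Σ_{i∈S} κ_i ) : κ ∈ ℝ^V, κ ≥ 0 }, and the maximum over κ is attained. -/

import Mathlib

open scoped BigOperators

set_option linter.unusedSectionVars false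
set_option maxHeartbeats 1000000

/-- The non-homogeneous `ℓ∞`-relaxation `Θ_∞`. -/
noncomputable def thetaInf {V : Type*} [Fintype V] [DecidableEq V]
    (F : Finset V → ℝ) (w : V → ℝ) : ℝ :=
  sInf { t : ℝ | ∃ α : Finset V → ℝ,
    (∀ S, 0 ≤ α S) ∧ (∑ S : Finset V, α S) = 1 ∧
    (∀ i : V, |w i| ≤ ∑ S : Finset V, if i ∈ S then α S else 0) ∧
    t = ∑ S : Finset V, α S * F S }

section AuxLemmas
variable {V : Type*} [Fintype V] [DecidableEq V]

private lemma ciInf_le_finset (h : Finset V → ℝ) (S : Finset V) :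
    (⨅ T : Finset V, h T) ≤ h S :=
  ciInf_le (Set.Finite.bddBelow (Set.finite_range h)) S

private lemma ciInf_eq_inf' (h : Finset V → ℝ) :
    (⨅ S : Finset V, h S) = Finset.univ.inf' Finset.univ_nonempty h := by
  refine le_antisymm ?_ (le_ciInf fun S => Finset.inf'_le _ (Finset.mem_univ S))
  obtain ⟨S₀, _, hS₀⟩ := Finset.exists_mem_eq_inf' Finset.univ_nonempty h
  rw [hS₀]
  exact ciInf_le_finset h S₀

private lemma continuous_inf'_aux {ι X : Type*} [TopologicalSpace X] (s : Finset ι)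
    (hs : s.Nonempty) (f : ι → X → ℝ) (hf : ∀ i, Continuous (f i)) :
    Continuous fun x => s.inf' hs fun i => f i x := by
  induction hs using Finset.Nonempty.cons_induction with
  | singleton a => exact hf a
  | cons a s ha hs ih => simp only [Finset.inf'_cons hs]; exact (hf a).min ih

private lemma sum_mul_indicator (α : Finset V → ℝ) (κ : V → ℝ) :
    ∑ S : Finset V, α S * ∑ i ∈ S, κ i
      = ∑ i : V, κ i * ∑ S : Finset V, (if i ∈ S then α S else 0) := by
  have h1 : ∀ S : Finset V, α S * ∑ i ∈ S, κ i
      = ∑ i : V, (if i ∈ S then κ i * α S else 0) := by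
    intro S
    rw [Finset.sum_ite_mem, Finset.univ_inter, ← Finset.sum_mul, mul_comm]
  have h2 : ∀ i : V, ∑ S : Finset V, (if i ∈ S then κ i * α S else 0)
      = κ i * ∑ S : Finset V, (if i ∈ S then α S else 0) := by
    intro i
    rw [Finset.mul_sum]
    exact Finset.sum_congr rfl fun S _ => by split_ifs <;> simp
  simp_rw [h1]
  rw [Finset.sum_comm]
  exact Finset.sum_congr rfl fun i _ => h2 i

private lemma weak_duality (F : Finset V → ℝ) (κ : V → ℝ) (hκ : ∀ i, 0 ≤ κ i)
    (b : V → ℝ) (α : Finset V → ℝ) (hα0 : ∀ S, 0 ≤ α S)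
    (hα1 : ∑ S : Finset V, α S = 1)
    (hαb : ∀ i, b i ≤ ∑ S : Finset V, if i ∈ S then α S else 0) :
    (∑ i : V, κ i * b i) + (⨅ S : Finset V, (F S - ∑ i ∈ S, κ i))
      ≤ ∑ S : Finset V, α S * F S := by
  set m := ⨅ S : Finset V, (F S - ∑ i ∈ S, κ i) with hm
  have h2 : ∑ i : V, κ i * b i ≤ ∑ S : Finset V, α S * ∑ i ∈ S, κ i := by
    rw [sum_mul_indicator]
    exact Finset.sum_le_sum fun i _ => mul_le_mul_of_nonneg_left (hαb i) (hκ i)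
  have h3 : m ≤ ∑ S : Finset V, α S * (F S - ∑ i ∈ S, κ i) := by
    calc m = (∑ S : Finset V, α S) * m := by rw [hα1, one_mul]
    _ = ∑ S : Finset V, α S * m := by rw [Finset.sum_mul]
    _ ≤ _ := Finset.sum_le_sum fun S _ =>
        mul_le_mul_of_nonneg_left (ciInf_le_finset _ S) (hα0 S)
  have h4 : ∑ S : Finset V, α S * F S
      = (∑ S : Finset V, α S * ∑ i ∈ S, κ i)
        + ∑ S : Finset V, α S * (F S - ∑ i ∈ S, κ i) := by
    rw [← Finset.sum_add_distrib]
    exact Finset.sum_congr rfl fun S _ => by ring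
  linarith

private def cvec (F : Finset V → ℝ) (α : Finset V → ℝ) (s : V → ℝ) (μ : ℝ) :
    (V ⊕ Bool) → ℝ
  | Sum.inl i => (∑ S : Finset V, if i ∈ S then α S else 0) - s i
  | Sum.inr false => ∑ S : Finset V, α S
  | Sum.inr true => (∑ S : Finset V, α S * F S) + μ

private lemma cvec_comb (F : Finset V → ℝ) (a c : ℝ) (α α' : Finset V → ℝ)
    (s s' : V → ℝ) (μ μ' : ℝ) :
    a • cvec F α s μ + c • cvec F α' s' μ'
      = cvec F (fun S => a * α S + c * α' S) (fun i => a * s i + c * s' i)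
          (a * μ + c * μ') := by
  funext j
  have e1 : ∀ i : V, (∑ S : Finset V, if i ∈ S then a * α S + c * α' S else 0)
      = a * (∑ S : Finset V, if i ∈ S then α S else 0)
        + c * (∑ S : Finset V, if i ∈ S then α' S else 0) := by
    intro i
    rw [Finset.mul_sum, Finset.mul_sum, ← Finset.sum_add_distrib]
    exact Finset.sum_congr rfl fun S _ => by split_ifs <;> ring
  have e2 : (∑ S : Finset V, (a * α S + c * α' S))
      = a * (∑ S : Finset V, α S) + c * (∑ S : Finset V, α' S) := by
    rw [Finset.mul_sum, Finset.mul_sum, ← Finset.sum_add_distrib]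
  have e3 : (∑ S : Finset V, (a * α S + c * α' S) * F S)
      = a * (∑ S : Finset V, α S * F S) + c * (∑ S : Finset V, α' S * F S) := by
    rw [Finset.mul_sum, Finset.mul_sum, ← Finset.sum_add_distrib]
    exact Finset.sum_congr rfl fun S _ => by ring
  rcases j with i | b
  · simp only [Pi.add_apply, Pi.smul_apply, smul_eq_mul, cvec, e1]; ring
  · rcases b with _ | _
    · simp only [Pi.add_apply, Pi.smul_apply, smul_eq_mul, cvec, e2]
    · simp only [Pi.add_apply, Pi.smul_apply, smul_eq_mul, cvec, e3]; ring

private lemma cvec_zero (F : Finset V → ℝ) : cvec F 0 0 0 = 0 := by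
  funext j
  rcases j with i | b
  · simp [cvec]
  · rcases b with _ | _ <;> simp [cvec]

private lemma approx_dual (F : Finset V → ℝ) (hF0 : F ∅ = 0) (hFnn : ∀ A, 0 ≤ F A)
    (w : V → ℝ) (hw : ∀ i, |w i| ≤ 1) {ε : ℝ} (hε : 0 < ε) :
    ∃ κ : V → ℝ, (∀ i, 0 ≤ κ i) ∧
      thetaInf F w - ε
        < (∑ i : V, κ i * |w i|) + ⨅ S : Finset V, (F S - ∑ i ∈ S, κ i) := by
  classical
  have hPbdd : BddBelow { t : ℝ | ∃ α : Finset V → ℝ,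
      (∀ S, 0 ≤ α S) ∧ (∑ S : Finset V, α S) = 1 ∧
      (∀ i : V, |w i| ≤ ∑ S : Finset V, if i ∈ S then α S else 0) ∧
      t = ∑ S : Finset V, α S * F S } := by
    refine ⟨0, ?_⟩
    rintro t ⟨α, hα0, -, -, rfl⟩
    exact Finset.sum_nonneg fun S _ => mul_nonneg (hα0 S) (hFnn S)
  set C : Set ((V ⊕ Bool) → ℝ) :=
    { x | ∃ α s μ, (∀ S, 0 ≤ α S) ∧ (∀ i, 0 ≤ s i) ∧ 0 ≤ μ ∧ x = cvec F α s μ } with hCdef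
  have hmemC : ∀ α s μ, (∀ S, 0 ≤ α S) → (∀ i, 0 ≤ s i) → (0 ≤ μ) → cvec F α s μ ∈ C :=
    fun α s μ h1 h2 h3 => ⟨α, s, μ, h1, h2, h3, rfl⟩
  have hCconv : Convex ℝ C := by
    rintro x ⟨α, s, μ, hα, hs, hμ, rfl⟩ y ⟨α', s', μ', hα', hs', hμ', rfl⟩ a c ha hc hac
    rw [cvec_comb]
    exact hmemC _ _ _
      (fun S => add_nonneg (mul_nonneg ha (hα S)) (mul_nonneg hc (hα' S)))
      (fun i => add_nonneg (mul_nonneg ha (hs i)) (mul_nonneg hc (hs' i)))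
      (add_nonneg (mul_nonneg ha hμ) (mul_nonneg hc hμ'))
  have hCsmul : ∀ a : ℝ, 0 ≤ a → ∀ x ∈ C, a • x ∈ C := by
    rintro a ha x ⟨α, s, μ, hα, hs, hμ, rfl⟩
    have h := cvec_comb F a 0 α α s s μ μ
    rw [zero_smul, add_zero] at h
    rw [h]
    exact hmemC _ _ _
      (fun S => by nlinarith [hα S])
      (fun i => by nlinarith [hs i])
      (by nlinarith)
  have hC0 : (0 : (V ⊕ Bool) → ℝ) ∈ C := by
    rw [← cvec_zero F]
    exact hmemC _ _ _ (fun S => le_refl 0) (fun i => le_refl 0) (le_refl 0)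
  set p : (V ⊕ Bool) → ℝ :=
    Sum.elim (fun i => |w i|) (fun b => if b then thetaInf F w - ε else 1) with hpdef
  -- p is not in the closure of C
  have hpnc : p ∉ closure C := by
    intro hp
    obtain ⟨x, hxC, hxlim⟩ := mem_closure_iff_seq_limit.mp hp
    choose A sl mu hA hsl hmu hxeq using hxC
    have hco : ∀ j, Filter.Tendsto (fun n => x n j) Filter.atTop (nhds (p j)) :=
      fun j => (tendsto_pi_nhds.mp hxlim) j
    have hmass : Filter.Tendsto (fun n => ∑ S : Finset V, A n S) Filter.atTop (nhds 1) := by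
      have h := hco (Sum.inr false)
      have he : (fun n => x n (Sum.inr false)) = fun n => ∑ S : Finset V, A n S :=
        funext fun n => by rw [hxeq n]; rfl
      rw [he] at h
      exact h
    obtain ⟨N, hN⟩ : ∃ N, ∀ n ≥ N, (∑ S : Finset V, A n S) ≤ 2 :=
      Filter.eventually_atTop.mp
        (hmass.eventually (eventually_le_nhds (by norm_num : (1:ℝ) < 2)))
    have hyIcc : ∀ n, A (n + N) ∈ Set.Icc (0 : Finset V → ℝ) (fun _ => 2) := by
      intro n
      constructor
      · intro S; exact hA _ S
      · intro S
        exact le_trans (Finset.single_le_sum (fun T _ => hA _ T) (Finset.mem_univ S))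
          (hN _ (Nat.le_add_left N n))
    obtain ⟨α, hαmem, φ, hφ, hαlim⟩ := isCompact_Icc.tendsto_subseq hyIcc
    set k : ℕ → ℕ := fun n => φ n + N with hkdef
    have hk : Filter.Tendsto k Filter.atTop Filter.atTop :=
      Filter.tendsto_atTop_mono (fun n => Nat.le_add_right (φ n) N) hφ.tendsto_atTop
    have hcoord : ∀ S, Filter.Tendsto (fun n => A (k n) S) Filter.atTop (nhds (α S)) :=
      fun S => (tendsto_pi_nhds.mp hαlim) S
    have hα0 : ∀ S, 0 ≤ α S := fun S => hαmem.1 S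
    have hmass' : (∑ S : Finset V, α S) = 1 := by
      refine tendsto_nhds_unique
        (tendsto_finset_sum _ fun S _ => hcoord S) (hmass.comp hk)
    have hmarg : ∀ i, |w i| ≤ ∑ S : Finset V, if i ∈ S then α S else 0 := by
      intro i
      have h1 : Filter.Tendsto (fun n => ∑ S : Finset V, if i ∈ S then A (k n) S else 0)
          Filter.atTop (nhds (∑ S : Finset V, if i ∈ S then α S else 0)) := by
        refine tendsto_finset_sum _ fun S _ => ?_
        by_cases h : i ∈ S
        · simpa [h] using hcoord S
        · simp [h]
      have h2 : Filter.Tendsto (fun n => x (k n) (Sum.inl i)) Filter.atTop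
          (nhds (|w i|)) := (hco (Sum.inl i)).comp hk
      have h3 := h1.sub h2
      have h4 : 0 ≤ (∑ S : Finset V, if i ∈ S then α S else 0) - |w i| := by
        refine ge_of_tendsto' h3 fun n => ?_
        have he : (∑ S : Finset V, if i ∈ S then A (k n) S else 0) - x (k n) (Sum.inl i)
            = sl (k n) i := by rw [hxeq (k n)]; show _ - (_ - sl (k n) i) = _; ring
        rw [he]
        exact hsl _ i
      linarith
    have htle : thetaInf F w ≤ ∑ S : Finset V, α S * F S :=
      csInf_le hPbdd ⟨α, hα0, hmass', hmarg, rfl⟩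
    have h5 : Filter.Tendsto (fun n => ∑ S : Finset V, A (k n) S * F S) Filter.atTop
        (nhds (∑ S : Finset V, α S * F S)) :=
      tendsto_finset_sum _ fun S _ => (hcoord S).mul_const (F S)
    have h6 : Filter.Tendsto (fun n => x (k n) (Sum.inr true)) Filter.atTop
        (nhds (thetaInf F w - ε)) := (hco (Sum.inr true)).comp hk
    have h8 : 0 ≤ (thetaInf F w - ε) - ∑ S : Finset V, α S * F S := by
      refine ge_of_tendsto' (h6.sub h5) fun n => ?_
      have he : x (k n) (Sum.inr true) - (∑ S : Finset V, A (k n) S * F S) = mu (k n) := by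
        rw [hxeq (k n)]; show (_ + mu (k n)) - _ = _; ring
      rw [he]
      exact hmu _
    linarith
  -- separation
  obtain ⟨f, u, hfu, hup⟩ :=
    geometric_hahn_banach_closed_point (hCconv.closure) isClosed_closure hpnc
  have hu : 0 < u := by
    have h := hfu 0 (subset_closure hC0)
    simpa using h
  have hfC : ∀ x ∈ C, f x ≤ 0 := by
    intro x hx
    by_contra hcon
    push_neg at hcon
    have hmem := hCsmul (u / f x) (le_of_lt (div_pos hu hcon)) x hx
    have h := hfu _ (subset_closure hmem)
    rw [map_smul, smul_eq_mul, div_mul_cancel₀ _ (ne_of_gt hcon)] at h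
    exact lt_irrefl u h
  -- coordinates of f
  set κ0 : V → ℝ := fun i => f (fun j' => if Sum.inl i = j' then 1 else 0) with hκ0def
  set lam0 : ℝ := f (fun j' => if Sum.inr false = j' then 1 else 0) with hlam0def
  set tau0 : ℝ := f (fun j' => if Sum.inr true = j' then 1 else 0) with htau0def
  have hfx : ∀ x : (V ⊕ Bool) → ℝ,
      f x = (∑ i : V, x (Sum.inl i) * κ0 i) + x (Sum.inr false) * lam0
        + x (Sum.inr true) * tau0 := by
    intro x
    conv_lhs => rw [pi_eq_sum_univ x, map_sum]
    simp only [map_smul, smul_eq_mul]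
    rw [Fintype.sum_sum_type, Fintype.sum_bool]
    ring
  -- generator inequalities
  have hκ0nn : ∀ i, 0 ≤ κ0 i := by
    intro i
    have hmem := hmemC 0 (fun i' => if i = i' then 1 else 0) 0
      (fun S => le_refl 0) (fun i' => by show 0 ≤ (if i = i' then (1:ℝ) else 0); split_ifs <;> norm_num) (le_refl 0)
    have h := hfC _ hmem
    rw [hfx] at h
    have e : ∀ i' : V, cvec F 0 (fun i' => if i = i' then (1:ℝ) else 0) 0 (Sum.inl i')
        = -(if i = i' then (1:ℝ) else 0) := by
      intro i'; show (∑ S : Finset V, if i' ∈ S then (0:ℝ) else 0) - _ = _; simp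
    simp only [e] at h
    have e2 : cvec F 0 (fun i' => if i = i' then (1:ℝ) else 0) 0 (Sum.inr false) = 0 := by
      show (∑ S : Finset V, (0:ℝ)) = 0; simp
    have e3 : cvec F 0 (fun i' => if i = i' then (1:ℝ) else 0) 0 (Sum.inr true) = 0 := by
      show (∑ S : Finset V, (0:ℝ) * F S) + 0 = 0; simp
    rw [e2, e3] at h
    simp only [neg_mul, ite_mul, one_mul, zero_mul, zero_add, zero_mul, add_zero,
      Finset.sum_neg_distrib] at h
    rw [Finset.sum_ite_eq (Finset.univ) i κ0] at h
    simp at h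
    linarith
  have htau0 : tau0 ≤ 0 := by
    have hmem := hmemC 0 0 1 (fun S => le_refl 0) (fun i => le_refl 0) (by norm_num)
    have h := hfC _ hmem
    rw [hfx] at h
    have e1 : ∀ i : V, cvec F 0 0 1 (Sum.inl i) = 0 := by
      intro i; show (∑ S : Finset V, if i ∈ S then (0:ℝ) else 0) - 0 = 0; simp
    have e2 : cvec F 0 0 1 (Sum.inr false) = 0 := by
      show (∑ S : Finset V, (0:ℝ)) = 0; simp
    have e3 : cvec F 0 0 1 (Sum.inr true) = 1 := by
      show (∑ S : Finset V, (0:ℝ) * F S) + 1 = 1; simp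
    simp only [e1, e2, e3] at h
    simpa using h
  have hvS : ∀ S : Finset V, (∑ i ∈ S, κ0 i) + lam0 + F S * tau0 ≤ 0 := by
    intro S
    have hmem := hmemC (fun S' => if S' = S then 1 else 0) 0 0
      (fun S' => by show 0 ≤ (if S' = S then (1:ℝ) else 0); split_ifs <;> norm_num) (fun i => le_refl 0) (le_refl 0)
    have h := hfC _ hmem
    rw [hfx] at h
    have e1 : ∀ i : V, cvec F (fun S' => if S' = S then (1:ℝ) else 0) 0 0 (Sum.inl i)
        = if i ∈ S then 1 else 0 := by
      intro i
      show (∑ S' : Finset V, if i ∈ S' then (if S' = S then (1:ℝ) else 0) else 0) - 0 = _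
      rw [sub_zero, Finset.sum_eq_single S (fun S' _ hne => by simp [hne]) (by simp)]
      simp
    have e2 : cvec F (fun S' => if S' = S then (1:ℝ) else 0) 0 0 (Sum.inr false) = 1 := by
      show (∑ S' : Finset V, if S' = S then (1:ℝ) else 0) = 1
      rw [Finset.sum_eq_single S (fun S' _ hne => by simp [hne]) (by simp)]
      simp
    have e3 : cvec F (fun S' => if S' = S then (1:ℝ) else 0) 0 0 (Sum.inr true) = F S := by
      show (∑ S' : Finset V, (if S' = S then (1:ℝ) else 0) * F S') + 0 = F S
      rw [add_zero, Finset.sum_eq_single S (fun S' _ hne => by simp [hne]) (by simp)]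
      simp
    simp only [e1, e2, e3, one_mul] at h
    have e4 : (∑ i : V, (if i ∈ S then (1:ℝ) else 0) * κ0 i) = ∑ i ∈ S, κ0 i := by
      rw [show (∑ i ∈ S, κ0 i) = ∑ i ∈ Finset.univ ∩ S, κ0 i by rw [Finset.univ_inter],
        ← Finset.sum_ite_mem]
      exact Finset.sum_congr rfl fun i _ => by split_ifs <;> simp
    rw [e4] at h
    exact h
  have hp' : 0 < (∑ i : V, |w i| * κ0 i) + lam0 + (thetaInf F w - ε) * tau0 := by
    have h := hup
    rw [hfx p] at h
    have e1 : ∀ i : V, p (Sum.inl i) = |w i| := fun i => rfl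
    have e2 : p (Sum.inr false) = 1 := rfl
    have e3 : p (Sum.inr true) = thetaInf F w - ε := rfl
    simp only [e1, e2, e3, one_mul] at h
    linarith
  -- tau0 < 0
  have htauneg : tau0 < 0 := by
    rcases lt_or_eq_of_le htau0 with h | h
    · exact h
    · exfalso
      have h1 := hvS Finset.univ
      rw [h] at h1
      have h2 : (∑ i : V, |w i| * κ0 i) ≤ ∑ i : V, κ0 i :=
        Finset.sum_le_sum fun i _ => by nlinarith [hκ0nn i, hw i, abs_nonneg (w i)]
      rw [h] at hp'
      simp only [mul_zero, add_zero, zero_mul] at h1 hp'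
      linarith
  set tau : ℝ := -tau0 with htaudef
  have htaupos : 0 < tau := by rw [htaudef]; linarith
  refine ⟨fun i => κ0 i / tau, fun i => div_nonneg (hκ0nn i) htaupos.le, ?_⟩
  have hInf : lam0 / tau ≤ ⨅ S : Finset V, (F S - ∑ i ∈ S, κ0 i / tau) := by
    refine le_ciInf fun S => ?_
    have h1 := hvS S
    have h2 : (∑ i ∈ S, κ0 i) + lam0 ≤ F S * tau := by
      have : F S * tau0 = -(F S * tau) := by rw [htaudef]; ring
      linarith [h1, this.symm.le]
    rw [le_sub_iff_add_le, ← Finset.sum_div, ← add_div, div_le_iff₀ htaupos]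
    linarith
  have hSum : thetaInf F w - ε < (∑ i : V, κ0 i / tau * |w i|) + lam0 / tau := by
    have h2 : (thetaInf F w - ε) * tau < (∑ i : V, |w i| * κ0 i) + lam0 := by
      have : (thetaInf F w - ε) * tau0 = -((thetaInf F w - ε) * tau) := by
        rw [htaudef]; ring
      linarith [hp', this.symm.le]
    have h3 : (∑ i : V, κ0 i / tau * |w i|) = (∑ i : V, |w i| * κ0 i) / tau := by
      rw [Finset.sum_div]
      exact Finset.sum_congr rfl fun i _ => by ring
    rw [h3, ← add_div, lt_div_iff₀ htaupos]
    linarith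
  calc thetaInf F w - ε < (∑ i : V, κ0 i / tau * |w i|) + lam0 / tau := hSum
    _ ≤ _ := by linarith [hInf]

private lemma trunc_le (F : Finset V → ℝ) (hFnn : ∀ A, 0 ≤ F A) (b : V → ℝ)
    (hb0 : ∀ i, 0 ≤ b i) (hb1 : ∀ i, b i ≤ 1) (M : ℝ) (hM : ∀ S, F S ≤ M) (hM0 : 0 ≤ M)
    (κ : V → ℝ) (hκ : ∀ i, 0 ≤ κ i) :
    (∑ i : V, κ i * b i) + (⨅ S : Finset V, (F S - ∑ i ∈ S, κ i))
      ≤ (∑ i : V, min (κ i) M * b i) + (⨅ S : Finset V, (F S - ∑ i ∈ S, min (κ i) M)) := by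
  classical
  set T : Finset V := Finset.univ.filter (fun i => M < κ i) with hT
  set Δ : ℝ := ∑ i ∈ T, (κ i - M) with hΔ
  have hTmem : ∀ i, i ∈ T ↔ M < κ i := by
    intro i; rw [hT, Finset.mem_filter]; simp
  have key : ∀ S : Finset V,
      (⨅ S' : Finset V, (F S' - ∑ i ∈ S', κ i)) + Δ ≤ F S - ∑ i ∈ S, min (κ i) M := by
    intro S
    have h1 : (⨅ S' : Finset V, (F S' - ∑ i ∈ S', κ i)) ≤ F (S ∪ T) - ∑ i ∈ S ∪ T, κ i :=
      ciInf_le_finset _ _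
    have e1 : ∑ i ∈ S ∪ T, κ i = (∑ i ∈ S ∪ T, min (κ i) M) + Δ := by
      have e1a : ∑ i ∈ S ∪ T, (κ i - min (κ i) M) = ∑ i ∈ T, (κ i - min (κ i) M) := by
        refine (Finset.sum_subset Finset.subset_union_right fun i _ hiT => ?_).symm
        have hle : κ i ≤ M := not_lt.mp ((hTmem i).not.mp hiT |> fun hh => by
          exact fun hlt => hh hlt)
        rw [min_eq_left hle, sub_self]
      have e1b : ∑ i ∈ T, (κ i - min (κ i) M) = Δ := by
        rw [hΔ]
        exact Finset.sum_congr rfl fun i hi => by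
          rw [min_eq_right (le_of_lt ((hTmem i).mp hi))]
      rw [Finset.sum_sub_distrib] at e1a
      linarith [e1a, e1b]
    have e2 : ∑ i ∈ S ∪ T, min (κ i) M
        = (∑ i ∈ S, min (κ i) M) + M * (T \ S).card := by
      rw [← Finset.union_sdiff_self_eq_union, Finset.sum_union Finset.disjoint_sdiff]
      congr 1
      rw [Finset.sum_congr rfl (fun i hi => min_eq_right
        (le_of_lt ((hTmem i).mp (Finset.mem_sdiff.mp hi).1)))]
      rw [Finset.sum_const, nsmul_eq_mul, mul_comm]
    have e3 : F (S ∪ T) ≤ F S + M * (T \ S).card := by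
      rcases Finset.eq_empty_or_nonempty (T \ S) with h | h
      · have hST : S ∪ T = S := by
          rw [← Finset.union_sdiff_self_eq_union, h, Finset.union_empty]
        rw [hST, h]
        simp
      · have hc : (1:ℝ) ≤ (T \ S).card := by
          exact_mod_cast Nat.one_le_iff_ne_zero.mpr
            (Finset.card_ne_zero_of_mem h.choose_spec)
        have h2 := hM (S ∪ T)
        nlinarith [hFnn S]
    linarith
  have hinf2 : (⨅ S' : Finset V, (F S' - ∑ i ∈ S', κ i)) + Δ
      ≤ ⨅ S : Finset V, (F S - ∑ i ∈ S, min (κ i) M) := le_ciInf fun S => key S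
  have hsum : (∑ i : V, κ i * b i) ≤ (∑ i : V, min (κ i) M * b i) + Δ := by
    have hs1 : ∑ i : V, (κ i * b i - min (κ i) M * b i) ≤ Δ := by
      have ea : ∑ i : V, (κ i * b i - min (κ i) M * b i)
          = ∑ i ∈ T, (κ i * b i - min (κ i) M * b i) := by
        refine (Finset.sum_subset (Finset.subset_univ T) fun i _ hiT => ?_).symm
        have hle : κ i ≤ M := not_lt.mp (fun hlt => hiT ((hTmem i).mpr hlt))
        rw [min_eq_left hle, sub_self]
      rw [ea, hΔ]
      refine Finset.sum_le_sum fun i hi => ?_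
      have h1 : M < κ i := (hTmem i).mp hi
      rw [min_eq_right h1.le]
      nlinarith [hb0 i, hb1 i]
    rw [Finset.sum_sub_distrib] at hs1
    linarith
  linarith

end AuxLemmas

theorem stmt_16 {V : Type*} [Fintype V] [DecidableEq V]
    (F : Finset V → ℝ) (hF0 : F ∅ = 0) (hFnn : ∀ A : Finset V, 0 ≤ F A)
    (w : V → ℝ) (hw : ∀ i, |w i| ≤ 1) :
    IsGreatest
      { t : ℝ | ∃ κ : V → ℝ, (∀ i, 0 ≤ κ i) ∧
        t = (∑ i : V, κ i * |w i|) + ⨅ S : Finset V, (F S - ∑ i ∈ S, κ i) }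
      (thetaInf F w) := by
  classical
  have hPne : (∑ S : Finset V, (if S = Finset.univ then (1:ℝ) else 0) * F S)
      ∈ { t : ℝ | ∃ α : Finset V → ℝ,
        (∀ S, 0 ≤ α S) ∧ (∑ S : Finset V, α S) = 1 ∧
        (∀ i : V, |w i| ≤ ∑ S : Finset V, if i ∈ S then α S else 0) ∧
        t = ∑ S : Finset V, α S * F S } := by
    refine ⟨fun S => if S = Finset.univ then 1 else 0, ?_, ?_, ?_, rfl⟩
    · intro S; dsimp only; split_ifs <;> norm_num
    · rw [Finset.sum_eq_single Finset.univ (fun S _ h => by simp [h]) (by simp)]; simp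
    · intro i
      rw [Finset.sum_eq_single Finset.univ
        (fun S _ h => by simp [h]) (by simp)]
      simpa using hw i
  have hPbdd : BddBelow { t : ℝ | ∃ α : Finset V → ℝ,
      (∀ S, 0 ≤ α S) ∧ (∑ S : Finset V, α S) = 1 ∧
      (∀ i : V, |w i| ≤ ∑ S : Finset V, if i ∈ S then α S else 0) ∧
      t = ∑ S : Finset V, α S * F S } := by
    refine ⟨0, ?_⟩
    rintro t ⟨α, hα0, -, -, rfl⟩
    exact Finset.sum_nonneg fun S _ => mul_nonneg (hα0 S) (hFnn S)
  have hub : ∀ κ : V → ℝ, (∀ i, 0 ≤ κ i) →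
      (∑ i : V, κ i * |w i|) + (⨅ S : Finset V, (F S - ∑ i ∈ S, κ i))
        ≤ thetaInf F w := by
    intro κ hκ0
    refine le_csInf ⟨_, hPne⟩ ?_
    rintro t ⟨α, h0, h1, h2, rfl⟩
    exact weak_duality F κ hκ0 (fun i => |w i|) α h0 h1 h2
  constructor
  · -- the maximum is attained
    have hFne : (Finset.univ : Finset (Finset V)).Nonempty := Finset.univ_nonempty
    set M : ℝ := Finset.univ.sup' hFne F with hMdef
    have hM : ∀ S, F S ≤ M := fun S => Finset.le_sup' F (Finset.mem_univ S)
    have hM0 : 0 ≤ M := le_trans (hFnn ∅) (hM ∅)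
    set g : (V → ℝ) → ℝ := fun κ =>
      (∑ i : V, κ i * |w i|) + ⨅ S : Finset V, (F S - ∑ i ∈ S, κ i) with hgdef
    have hgeq : g = fun κ => (∑ i : V, κ i * |w i|)
        + Finset.univ.inf' hFne (fun S => F S - ∑ i ∈ S, κ i) :=
      funext fun κ => by rw [hgdef]; dsimp only; rw [ciInf_eq_inf']
    have hcont : Continuous g := by
      rw [hgeq]
      refine Continuous.add ?_ ?_
      · exact continuous_finset_sum _ fun i _ => (continuous_apply i).mul continuous_const
      · exact continuous_inf'_aux Finset.univ hFne
          (fun S (κ : V → ℝ) => F S - ∑ i ∈ S, κ i)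
          (fun S => continuous_const.sub (continuous_finset_sum _ fun i _ => continuous_apply i))
    have hBcomp : IsCompact (Set.Icc (0 : V → ℝ) (fun _ => M)) := isCompact_Icc
    have hBne : (Set.Icc (0 : V → ℝ) (fun _ => M)).Nonempty :=
      ⟨0, le_refl 0, fun i => hM0⟩
    obtain ⟨κs, hκsB, hmax⟩ := hBcomp.exists_isMaxOn hBne hcont.continuousOn
    have hκs0 : ∀ i, 0 ≤ κs i := fun i => hκsB.1 i
    have hle : g κs ≤ thetaInf F w := hub κs hκs0
    have hge : thetaInf F w ≤ g κs := by
      by_contra hcon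
      push_neg at hcon
      obtain ⟨κ, hκ0, hκgt⟩ := approx_dual F hF0 hFnn w hw
        (show (0:ℝ) < thetaInf F w - g κs by linarith)
      have e1 : g κs = (∑ i : V, κs i * |w i|) + ⨅ S : Finset V, (F S - ∑ i ∈ S, κs i) := by
        rw [hgdef]
      have h1 : g κs < g κ := by
        rw [hgdef]; dsimp only
        linarith [hκgt, e1]
      have h2 : g κ ≤ g (fun i => min (κ i) M) := by
        rw [hgdef]; dsimp only
        exact trunc_le F hFnn (fun i => |w i|) (fun i => abs_nonneg (w i)) hw M hM hM0 κ hκ0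
      have hmem : (fun i => min (κ i) M) ∈ Set.Icc (0 : V → ℝ) (fun _ => M) :=
        ⟨fun i => le_min (hκ0 i) hM0, fun i => min_le_right _ _⟩
      have h3 : g (fun i => min (κ i) M) ≤ g κs := isMaxOn_iff.mp hmax _ hmem
      linarith
    exact ⟨κs, hκs0, (le_antisymm hge hle).trans (by rw [hgdef])⟩
  · rintro t ⟨κ, hκ0, rfl⟩
    exact hub κ hκ0
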